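/- The relation ≈_di, i.e., the set of pairs (d₀, d₁) ∈ ℝ^(ℕ×ℕ) × ℝ^(ℕ×ℕ) such that d₀ and d₁ are metrics on ℕ and there exists a metric d* on ℕ together with dense isometries g₀ : ⟨ℕ,d₀⟩ → ⟨ℕ,d*⟩ and g₁ : ⟨ℕ,d₁⟩ → ⟨ℕ,d*⟩, is an analytic subset of ℝ^(ℕ×ℕ) × ℝ^(ℕ×ℕ) (with the product topology). -/

import Mathlib

open MeasureTheory

/-- `d : ℕ × ℕ → ℝ` is a metric on `ℕ`. -/
def IsMetricOnNat (d : ℕ × ℕ → ℝ) : Prop :=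
  (∀ m n : ℕ, d (m, n) = 0 ↔ m = n) ∧
  (∀ m n : ℕ, d (m, n) = d (n, m)) ∧
  (∀ m n k : ℕ, d (m, k) ≤ d (m, n) + d (n, k))

/-- `g : ℕ → ℕ` is a dense isometry from `⟨ℕ,d⟩` to `⟨ℕ,d'⟩`: it preserves distances and
its range is dense in `⟨ℕ,d'⟩`. -/
def DenseIsomCode (d d' : ℕ × ℕ → ℝ) (g : ℕ → ℕ) : Prop :=
  (∀ m n : ℕ, d' (g m, g n) = d (m, n)) ∧
  (∀ n : ℕ, ∀ ε : ℝ, 0 < ε → ∃ m : ℕ, d' (n, g m) < ε)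

set_option synthInstance.maxHeartbeats 400000
set_option synthInstance.maxSize 1000

private instance polishAux1 : PolishSpace ((ℕ → ℕ) × (ℕ → ℕ)) := inferInstance
private instance polishAux2 : PolishSpace ((ℕ × ℕ → ℝ) × (ℕ → ℕ) × (ℕ → ℕ)) := inferInstance
private instance polishAux3 :
    PolishSpace (((ℕ × ℕ → ℝ) × (ℕ × ℕ → ℝ)) × (ℕ × ℕ → ℝ) × (ℕ → ℕ) × (ℕ → ℕ)) :=
  inferInstance

private lemma measurable_eval2 :
    Measurable fun p : ((ℕ × ℕ) → ℝ) × (ℕ × ℕ) => p.1 p.2 :=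
  measurable_from_prod_countable_left fun y => measurable_pi_apply y

private lemma denseIsomCode_iff (d d' : ℕ × ℕ → ℝ) (g : ℕ → ℕ) :
    DenseIsomCode d d' g ↔
      ((∀ m n : ℕ, d' (g m, g n) = d (m, n)) ∧
        ∀ n k : ℕ, ∃ m : ℕ, d' (n, g m) < 1 / (k + 1)) := by
  constructor
  · rintro ⟨h1, h2⟩
    refine ⟨h1, fun n k => h2 n _ ?_⟩
    positivity
  · rintro ⟨h1, h2⟩
    refine ⟨h1, fun n ε hε => ?_⟩
    obtain ⟨k, hk⟩ := exists_nat_one_div_lt hε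
    obtain ⟨m, hm⟩ := h2 n k
    exact ⟨m, hm.trans hk⟩

private lemma measurableSet_isMetric {α : Type*} [MeasurableSpace α]
    {f : α → ℕ × ℕ → ℝ} (hf : Measurable f) :
    MeasurableSet {a | IsMetricOnNat (f a)} := by
  have hev : ∀ q : ℕ × ℕ, Measurable fun a => f a q :=
    fun q => (measurable_pi_apply q).comp hf
  simp only [IsMetricOnNat, Set.setOf_and, Set.setOf_forall]
  refine MeasurableSet.inter ?_ (MeasurableSet.inter ?_ ?_)
  · refine MeasurableSet.iInter fun m => MeasurableSet.iInter fun n => ?_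
    by_cases h : m = n
    · simp only [h, iff_true]
      exact measurableSet_eq_fun (hev (n, n)) measurable_const
    · simp only [h, iff_false]
      exact (measurableSet_eq_fun (hev (m, n)) measurable_const).compl
  · refine MeasurableSet.iInter fun m => MeasurableSet.iInter fun n => ?_
    exact measurableSet_eq_fun (hev (m, n)) (hev (n, m))
  · refine MeasurableSet.iInter fun m => MeasurableSet.iInter fun n =>
      MeasurableSet.iInter fun k => ?_
    exact measurableSet_le (hev (m, k)) ((hev (m, n)).add (hev (n, k)))

private lemma measurableSet_denseIsom {α : Type*} [MeasurableSpace α]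
    {f f' : α → ℕ × ℕ → ℝ} {g : α → ℕ → ℕ}
    (hf : Measurable f) (hf' : Measurable f') (hg : Measurable g) :
    MeasurableSet {a | DenseIsomCode (f a) (f' a) (g a)} := by
  have hev' : ∀ q : α → ℕ × ℕ, Measurable q → Measurable fun a => f' a (q a) :=
    fun q hq => measurable_eval2.comp (hf'.prodMk hq)
  simp only [denseIsomCode_iff, Set.setOf_and, Set.setOf_forall, Set.setOf_exists]
  apply MeasurableSet.inter
  · refine MeasurableSet.iInter fun m => MeasurableSet.iInter fun n => ?_
    refine measurableSet_eq_fun ?_ ((measurable_pi_apply (m, n)).comp hf)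
    exact hev' (fun a => (g a m, g a n))
      (((measurable_pi_apply m).comp hg).prodMk ((measurable_pi_apply n).comp hg))
  · refine MeasurableSet.iInter fun n => MeasurableSet.iInter fun k =>
      MeasurableSet.iUnion fun m => ?_
    refine measurableSet_lt ?_ measurable_const
    exact hev' (fun a => (n, g a m))
      (measurable_const.prodMk ((measurable_pi_apply m).comp hg))

/-- the relation `≈_di` (there is a common metric `d*` on `ℕ` with dense
isometries from `⟨ℕ,d₀⟩` and `⟨ℕ,d₁⟩` into `⟨ℕ,d*⟩`) is an analytic subset of
`ℝ^(ℕ×ℕ) × ℝ^(ℕ×ℕ)`. -/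
theorem analyticSet_commonAmalgamRel :
    MeasureTheory.AnalyticSet
      {p : (ℕ × ℕ → ℝ) × (ℕ × ℕ → ℝ) |
        IsMetricOnNat p.1 ∧ IsMetricOnNat p.2 ∧
        ∃ dstar : ℕ × ℕ → ℝ, IsMetricOnNat dstar ∧
          ∃ g₀ g₁ : ℕ → ℕ, DenseIsomCode p.1 dstar g₀ ∧ DenseIsomCode p.2 dstar g₁} := by
  classical
  set S : Set (((ℕ × ℕ → ℝ) × (ℕ × ℕ → ℝ)) × (ℕ × ℕ → ℝ) × (ℕ → ℕ) × (ℕ → ℕ)) :=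
    {z | IsMetricOnNat z.1.1 ∧ IsMetricOnNat z.1.2 ∧ IsMetricOnNat z.2.1 ∧
      DenseIsomCode z.1.1 z.2.1 z.2.2.1 ∧ DenseIsomCode z.1.2 z.2.1 z.2.2.2} with hSdef
  have himg : {p : (ℕ × ℕ → ℝ) × (ℕ × ℕ → ℝ) |
        IsMetricOnNat p.1 ∧ IsMetricOnNat p.2 ∧
        ∃ dstar : ℕ × ℕ → ℝ, IsMetricOnNat dstar ∧
          ∃ g₀ g₁ : ℕ → ℕ, DenseIsomCode p.1 dstar g₀ ∧ DenseIsomCode p.2 dstar g₁} =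
      Prod.fst '' S := by
    ext p
    constructor
    · rintro ⟨h0, h1, dstar, hd, g0, g1, hg0, hg1⟩
      exact ⟨(p, dstar, g0, g1), ⟨h0, h1, hd, hg0, hg1⟩, rfl⟩
    · rintro ⟨z, ⟨h0, h1, hd, hg0, hg1⟩, rfl⟩
      exact ⟨h0, h1, z.2.1, hd, z.2.2.1, z.2.2.2, hg0, hg1⟩
  rw [himg]
  have hmeas : MeasurableSet S := by
    rw [hSdef]
    simp only [Set.setOf_and]
    refine (measurableSet_isMetric measurable_fst.fst).inter
      ((measurableSet_isMetric measurable_fst.snd).inter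
        ((measurableSet_isMetric measurable_snd.fst).inter
          ((measurableSet_denseIsom measurable_fst.fst measurable_snd.fst
              measurable_snd.snd.fst).inter
            (measurableSet_denseIsom measurable_fst.snd measurable_snd.fst
              measurable_snd.snd.snd))))
  exact hmeas.analyticSet.image_of_continuous continuous_fst
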